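/- If B' and B'' are bases in decomposed form that are concatenable, then C(B')·C(B'') = C(B' ⊙ B''), where B' ⊙ B'' is the dot-product of B' and B''. -/

import Mathlib

namespace Consensual

/-- The double alphabet `Σ̃ = Σ × Bool`: second component `true` means the letter is dotted. -/
abbrev DLetter (S : Type) := S × Bool

variable {S : Type} [DecidableEq S]

/-- Partial match of two letters of the double alphabet:
`a @ å = å @ a = a`, `å @ å = å`, undefined otherwise. -/
def matchLetter (x y : DLetter S) : Option (DLetter S) :=
  if x.1 = y.1 ∧ (x.2 ∨ y.2) then some (x.1, x.2 && y.2) else none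

/-- Letterwise partial match of two words over the double alphabet. -/
def matchWord : List (DLetter S) → List (DLetter S) → Option (List (DLetter S))
  | [], [] => some []
  | x :: xs, y :: ys => do
      let l ← matchLetter x y
      let rest ← matchWord xs ys
      pure (l :: rest)
  | _, _ => none

/-- Elementwise match of two languages over the double alphabet. -/
def matchLang (B C : Language (DLetter S)) : Language (DLetter S) :=
  { w | ∃ u ∈ B, ∃ v ∈ C, matchWord u v = some w }

/-- Iterated match `B^{i@}`. -/
def matchIter (B : Language (DLetter S)) : ℕ → Language (DLetter S)
  | 0 => B
  | i + 1 => matchLang (matchIter B i) B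

/-- Match closure `B^@ = ⋃ i, B^{i@}`. -/
def matchClosure (B : Language (DLetter S)) : Language (DLetter S) :=
  ⨆ i, matchIter B i

/-- The embedding of a word over `Σ` as an undotted word over `Σ̃`. -/
def undotWord (w : List S) : List (DLetter S) := w.map (fun a => (a, false))

/-- The consensual language `C(B) = B^@ ∩ Σ*` with base `B`, as a language over `Σ`. -/
def Cons (B : Language (DLetter S)) : Language S :=
  { w | undotWord w ∈ matchClosure B }

/-- A word consisting only of dotted letters. -/
def allDotted (w : List (DLetter S)) : Prop := ∀ l ∈ w, l.2 = true

/-- `Σ̊*`, the language of all-dotted words (including ε). -/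
def dottedStar : Language (DLetter S) := { w | allDotted w }

/-- `B ⊆ Σ̃* − Σ̊⁺`: no nonempty all-dotted word belongs to `B`. -/
def ProperBase (B : Language (DLetter S)) : Prop :=
  ∀ w ∈ B, w ≠ [] → ¬ allDotted w

/-- `B` is in decomposed form with scaffold `sc` and fill `fl`. -/
def IsDecomposed (B sc fl : Language (DLetter S)) : Prop :=
  ProperBase B ∧ B = sc ⊔ fl ∧ Disjoint sc fl ∧
    Cons fl = (⊥ : Language S) ∧ matchLang sc sc = (⊥ : Language (DLetter S))

/-- Two decomposed bases `sc' ⊔ fl'` and `sc'' ⊔ fl''` are joinable. -/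
def Joinable (sc' fl' sc'' fl'' : Language (DLetter S)) : Prop :=
  IsDecomposed ((sc' ⊔ fl') ⊔ (sc'' ⊔ fl'')) (sc' ⊔ sc'') (fl' ⊔ fl'') ∧
    matchLang sc' fl'' = (⊥ : Language (DLetter S)) ∧
    matchLang sc'' fl' = (⊥ : Language (DLetter S))

/-- `dot`: make every letter of a word dotted. -/
def dotWord (w : List (DLetter S)) : List (DLetter S) := w.map (fun l => (l.1, true))

/-- The dot-product `B' ⊙ B'' = (sc'·sc'') ⊔ fl' ⊔ fl''` of two decomposed bases. -/
def dotProduct (sc' fl' sc'' fl'' : Language (DLetter S)) : Language (DLetter S) :=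
  (sc' * sc'') ⊔ fl' ⊔ fl''

/-- Two decomposed bases `sc' ⊔ fl'` and `sc'' ⊔ fl''` are concatenable. -/
def Concatenable (sc' fl' sc'' fl'' : Language (DLetter S)) : Prop :=
  IsDecomposed (dotProduct sc' fl' sc'' fl'') (sc' * sc'') (fl' ⊔ fl'') ∧
  (∀ w' : List (DLetter S), w' ≠ [] → ∀ y' ∈ sc', ∀ y'' ∈ sc'',
    ((∃ x' ∈ fl', w' = x' ++ dotWord y'' ∧ (matchWord x' y').isSome) ↔
      (w' ∈ fl' ∧ (matchWord w' (y' ++ y'')).isSome))) ∧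
  (∀ w'' : List (DLetter S), w'' ≠ [] → ∀ y' ∈ sc', ∀ y'' ∈ sc'',
    ((∃ x'' ∈ fl'', w'' = dotWord y' ++ x'' ∧ (matchWord x'' y'').isSome) ↔
      (w'' ∈ fl'' ∧ (matchWord w'' (y' ++ y'')).isSome)))

/-! ### Slots, scaffolds and fills -/

/-- The word `å a^{r−1} å a^{m−r−1}`. -/
def slotWord (m r : ℕ) (a : S) : List (DLetter S) :=
  (a, true) :: (List.replicate (r - 1) (a, false) ++
    (a, true) :: List.replicate (m - r - 1) (a, false))

/-- `R_m(a) = {å a^{r−1} å a^{m−r−1} : r ∈ R}`. -/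
def Rm (m : ℕ) (R : Set ℕ) (a : S) : Language (DLetter S) :=
  { w | ∃ r ∈ R, w = slotWord m r a }

/-- Projection of a word over `Σ̃` on the two-letter alphabet `{a, å}`. -/
def projA (a : S) (x : List (DLetter S)) : List (DLetter S) :=
  x.filter (fun l => decide (l.1 = a))

/-- The scaffold language `sc_{R,m}`. -/
def scaffold (m : ℕ) (R : Set ℕ) : Language (DLetter S) :=
  { x | ∀ a : S, projA a x ∈ KStar.kstar (Rm m R a ⊔ {[(a, false)]}) }

/-- `switch`: interchange `a` and `å` in every position. -/
def switchWord (w : List (DLetter S)) : List (DLetter S) := w.map (fun l => (l.1, !l.2))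

/-- The fill language `fl_{R,m} = switch(sc_{R,m}) − Σ̊*`. -/
def fill (m : ℕ) (R : Set ℕ) : Language (DLetter S) :=
  { w | ∃ u ∈ scaffold (S := S) m R, w = switchWord u } \ dottedStar

/-- A language is shiftable if it absorbs all-dotted padding on both sides. -/
def Shiftable (F : Language (DLetter S)) : Prop :=
  F = dottedStar * F * dottedStar

/-- `R` is a set of slots of module `m`. -/
def SlotSet (m : ℕ) (R : Set ℕ) : Prop :=
  4 ≤ m ∧ 2 ∣ m ∧ R.Nonempty ∧ ∀ r ∈ R, 1 ≤ r ∧ r ≤ m / 2 - 1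

/-- The factor `α(i)…α(i+m−1)` of `α` (positions numbered from 1). -/
def factorAt (α : List (DLetter S)) (i m : ℕ) : List (DLetter S) :=
  (α.drop (i - 1)).take m

/-- `i` is a restarting point of `α ∈ π_ã(sc_{R,m})`. -/
def RestartScaffold (m : ℕ) (R : Set ℕ) (a : S) (α : List (DLetter S)) (i : ℕ) : Prop :=
  1 ≤ i ∧ i + m - 1 ≤ α.length ∧ factorAt α i m ∈ Rm m R a

/-- `i` is a restarting point of `α ∈ π_ã(fl_{R̂,m})`. -/
def RestartFill (m : ℕ) (Rh : Set ℕ) (a : S) (α : List (DLetter S)) (i : ℕ) : Prop :=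
  1 ≤ i ∧ i + m - 1 ≤ α.length ∧ (∃ u ∈ Rm m Rh a, factorAt α i m = switchWord u)

/-! ### Parikh images, COM-SLIP, and the family C(⊔,·) -/

/-- The Parikh image of a word. -/
def parikh (w : List S) : S → ℕ := fun a => w.count a

/-- A linear subset of `ℕ^Σ`. -/
def IsLinearSet (T : Set (S → ℕ)) : Prop :=
  ∃ (q : ℕ) (c : S → ℕ) (p : Fin q → S → ℕ),
    T = { v | ∃ n : Fin q → ℕ, v = c + ∑ i, n i • p i }

/-- A semilinear subset of `ℕ^Σ`: a finite union of linear sets. -/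
def IsSemilinearSet (T : Set (S → ℕ)) : Prop :=
  ∃ (t : ℕ) (f : Fin t → Set (S → ℕ)), (∀ i, IsLinearSet (f i)) ∧ T = ⋃ i, f i

/-- A commutative language: membership only depends on the Parikh image. -/
def CommutativeLang (L : Language S) : Prop :=
  ∀ w ∈ L, ∀ v : List S, parikh v = parikh w → v ∈ L

/-- A COM-SLIP language: commutative with semilinear Parikh image. -/
def IsComSlip (L : Language S) : Prop :=
  CommutativeLang L ∧ IsSemilinearSet (parikh '' L)

/-- The family `C(⊔,·)`: the smallest family containing the COM-SLIP languages and
closed under binary union and concatenation. -/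
inductive CUC {S : Type} [DecidableEq S] : Language S → Prop
  | base {L : Language S} : IsComSlip L → CUC L
  | union {L M : Language S} : CUC L → CUC M → CUC (L ⊔ M)
  | concat {L M : Language S} : CUC L → CUC M → CUC (L * M)

/-- Regular languages, via acceptance by a DFA with finitely many states. -/
def IsRegularLang {γ : Type} (B : Language γ) : Prop :=
  ∃ (σ : Type) (_ : Fintype σ) (M : DFA γ σ), M.accepts = B

/-! ### Shuffle, appending, and the base `D` for a COM-LIP language -/

/-- `IsShuffle x y z`: `z` is an interleaving of `x` and `y`. -/
inductive IsShuffle {γ : Type} : List γ → List γ → List γ → Prop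
  | nil : IsShuffle [] [] []
  | left {x : γ} {xs ys zs} : IsShuffle xs ys zs → IsShuffle (x :: xs) ys (x :: zs)
  | right {y : γ} {xs ys zs} : IsShuffle xs ys zs → IsShuffle xs (y :: ys) (y :: zs)

/-- The shuffle of two languages. -/
def shuffleLang {γ : Type} (L M : Language γ) : Language γ :=
  { z | ∃ x ∈ L, ∃ y ∈ M, IsShuffle x y z }

/-- Split `w` as `u·v` where `v` is the longest suffix of `w` with no occurrence
of `a` or `å`; returns `(u, v)`. -/
def splitSuffix (a : S) (w : List (DLetter S)) : List (DLetter S) × List (DLetter S) :=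
  ((w.reverse.dropWhile (fun l => decide (l.1 ≠ a))).reverse,
   (w.reverse.takeWhile (fun l => decide (l.1 ≠ a))).reverse)

/-- The append operation `B ◁ A` for `A ⊆ a⁺`. -/
def appendA (a : S) (B : Language (DLetter S)) (A : Language S) : Language (DLetter S) :=
  { w' | ∃ w ∈ B, ∃ s ∈ A, ∃ z, IsShuffle (splitSuffix a w).2 (undotWord s) z ∧
      w' = (splitSuffix a w).1 ++ z }

/-- Projection of a language over `Σ` on the single letter `a`. -/
def projLetter (a : S) (F : Language S) : Language S :=
  { y | ∃ w ∈ F, y = w.filter (fun l => decide (l = a)) }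

/-- Letter-by-letter appending `B ◁ F` (over the alphabet `Fin k`,
processing the letters `a₁, …, a_k` in order). -/
def lblAppend {k : ℕ} (B : Language (DLetter (Fin k))) (F : Language (Fin k)) :
    Language (DLetter (Fin k)) :=
  (List.finRange k).foldl (fun Bc a => appendA a Bc (projLetter a F)) B

/-- Projection of a word over `Σ̃` on the undotted letters. -/
def projSigma (x : List (DLetter S)) : List S :=
  (x.filter (fun l => !l.2)).map Prod.fst

/-- The fill part `X` of the decomposed base for a COM-LIP language with periods `p`. -/
def Xlang {k q : ℕ} (m r : ℕ) (p : Fin q → Fin k → ℕ) : Language (DLetter (Fin k)) :=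
  { x | x ∈ fill m {r} ∧ ∃ i : Fin q, parikh (projSigma x) = p i }

/-- `Y = (R_m(a₁))* ⧢ … ⧢ (R_m(a_k))*`. -/
def Ylang (k : ℕ) (m : ℕ) (R : Set ℕ) : Language (DLetter (Fin k)) :=
  (List.finRange k).foldl
    (fun acc a => shuffleLang acc (KStar.kstar (Rm m R a))) (1 : Language (DLetter (Fin k)))

/-- The finite commutative language `W` with Parikh image
`{c + h₁p⁽¹⁾ + … + h_qp⁽q⁾ : 0 ≤ hⱼ < m/2}`. -/
def Wlang {k q : ℕ} (m : ℕ) (c : Fin k → ℕ) (p : Fin q → Fin k → ℕ) : Language (Fin k) :=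
  { w | ∃ h : Fin q → ℕ, (∀ i, h i < m / 2) ∧ parikh w = c + ∑ i, h i • p i }

/-- The decomposed base `D = X ⊔ (Y ◁ W)` for a COM-LIP language. -/
def Dlang {k q : ℕ} (m r : ℕ) (c : Fin k → ℕ) (p : Fin q → Fin k → ℕ) :
    Language (DLetter (Fin k)) :=
  Xlang m r p ⊔ lblAppend (Ylang k m {r}) (Wlang m c p)

/-- `matchListAll [x₁, …, x_n] = some u` iff `u = x₁ @ x₂ @ … @ x_n`. -/
def matchListAll : List (List (DLetter S)) → Option (List (DLetter S))
  | [] => none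
  | [x] => some x
  | x :: xs => (matchListAll xs).bind (fun u => matchWord x u)


/-! ### Auxiliary positional machinery -/


def baseAt (x : List (DLetter S)) (i : ℕ) : Option S := x[i]?.map Prod.fst

def undotAt (x : List (DLetter S)) (i : ℕ) : Bool := (x[i]?.map (fun l => !l.2)).getD false

lemma undotAt_of_le {x : List (DLetter S)} {i : ℕ} (h : x.length ≤ i) : undotAt x i = false := by
  simp [undotAt, List.getElem?_eq_none h]

lemma baseAt_of_le {x : List (DLetter S)} {i : ℕ} (h : x.length ≤ i) : baseAt x i = none := by
  simp [baseAt, List.getElem?_eq_none h]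

lemma word_ext {x y : List (DLetter S)} (hl : x.length = y.length)
    (hb : ∀ i, baseAt x i = baseAt y i) (hd : ∀ i, undotAt x i = undotAt y i) : x = y := by
  apply List.ext_getElem?
  intro n
  by_cases h : n < x.length
  · have hx : x[n]? = some (x[n]'h) := List.getElem?_eq_getElem h
    have hy : y[n]? = some (y[n]'(by omega)) := List.getElem?_eq_getElem (by omega)
    have hb' := hb n; have hd' := hd n
    rw [hx, hy]
    simp only [baseAt, undotAt, hx, hy, Option.map_some, Option.getD_some] at hb' hd'
    have hb'' : (x[n]'h).1 = (y[n]'(by omega)).1 := Option.some_injective _ hb'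
    have h2 : (x[n]'h).2 = (y[n]'(by omega)).2 := Bool.not_inj hd'
    exact congrArg some (Prod.ext hb'' h2)
  · rw [List.getElem?_eq_none (by omega), List.getElem?_eq_none (by omega)]

lemma matchLetter_eq_some_iff {x y l : DLetter S} :
    matchLetter x y = some l ↔ (x.1 = y.1 ∧ (x.2 ∨ y.2)) ∧ l = (x.1, x.2 && y.2) := by
  unfold matchLetter
  split
  · rename_i h
    simp only [Option.some.injEq]
    constructor
    · rintro rfl; exact ⟨h, rfl⟩
    · rintro ⟨-, rfl⟩; rfl
  · rename_i h
    constructor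
    · rintro ⟨⟩
    · rintro ⟨h', -⟩; exact absurd h' h

lemma matchWord_eq_some_iff {u v w : List (DLetter S)} :
    matchWord u v = some w ↔
      v.length = u.length ∧ w.length = u.length ∧
      ∀ i, baseAt v i = baseAt u i ∧ baseAt w i = baseAt u i ∧
        ¬(undotAt u i = true ∧ undotAt v i = true) ∧
        undotAt w i = (undotAt u i || undotAt v i) := by
  induction u generalizing v w with
  | nil =>
    cases v with
    | nil =>
      constructor
      · intro h
        have hw : ([] : List (DLetter S)) = w := by
          simpa [matchWord] using h
        subst hw
        exact ⟨rfl, rfl, fun i => by simp [baseAt, undotAt]⟩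
      · rintro ⟨-, hw, -⟩
        obtain rfl : w = [] := List.eq_nil_of_length_eq_zero (by simpa using hw)
        rfl
    | cons b bs => simp [matchWord]
  | cons a as ih =>
    cases v with
    | nil => simp [matchWord]
    | cons b bs =>
      have hMW : matchWord (a :: as) (b :: bs) = (matchLetter a b).bind
          (fun l => (matchWord as bs).bind (fun rest => some (l :: rest))) := rfl
      rw [hMW]
      constructor
      · intro h
        rcases Option.bind_eq_some_iff.mp h with ⟨l, hl, h2⟩
        rcases Option.bind_eq_some_iff.mp h2 with ⟨rest, hrest, hw⟩
        rcases matchLetter_eq_some_iff.mp hl with ⟨⟨hfst, hdef⟩, rfl⟩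
        rcases (ih (v := bs) (w := rest)).mp hrest with ⟨hlen1, hlen2, hpt⟩
        have hw' : w = (a.1, a.2 && b.2) :: rest := (Option.some.injEq _ _).mp hw |>.symm
        subst hw'
        refine ⟨by simp [hlen1], by simp [hlen2], fun i => ?_⟩
        cases i with
        | zero =>
          refine ⟨by simp [baseAt, hfst], by simp [baseAt], ?_, ?_⟩
          · simp only [undotAt, List.getElem?_cons_zero, Option.map_some, Option.getD_some]
            rcases hdef with h | h <;> simp [h]
          · simp only [undotAt, List.getElem?_cons_zero, Option.map_some, Option.getD_some]
            cases ha : a.2 <;> cases hb : b.2 <;> simp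
        | succ n =>
          have := hpt n
          simpa only [baseAt, undotAt, List.getElem?_cons_succ] using this
      · rintro ⟨hlen1, hlen2, hpt⟩
        cases w with
        | nil => simp at hlen2
        | cons c cs =>
          have h0 := hpt 0
          simp only [baseAt, undotAt, List.getElem?_cons_zero, Option.map_some,
            Option.getD_some, Option.some.injEq] at h0
          obtain ⟨hb0, hc0, hdef0, hd0⟩ := h0
          have hdef : a.2 = true ∨ b.2 = true := by
            cases ha : a.2
            · cases hb : b.2
              · exact absurd ⟨by simp [ha], by simp [hb]⟩ hdef0
              · right; rfl
            · left; rfl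
          have hl : matchLetter a b = some c := by
            rw [matchLetter_eq_some_iff]
            refine ⟨⟨hb0.symm, hdef⟩, ?_⟩
            refine Prod.ext hc0 ?_
            have : (!c.2) = (!a.2 || !b.2) := hd0
            cases ha : a.2 <;> cases hb : b.2 <;> simp [ha, hb] at this ⊢ <;> simp [this]
          have hrest : matchWord as bs = some cs := by
            rw [ih]
            refine ⟨by simpa using hlen1, by simpa using hlen2, fun n => ?_⟩
            have := hpt (n + 1)
            simpa only [baseAt, undotAt, List.getElem?_cons_succ] using this
          rw [hl, Option.bind_some, hrest, Option.bind_some]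

lemma matchWord_isSome_iff {u v : List (DLetter S)} :
    (matchWord u v).isSome = true ↔
      v.length = u.length ∧
      ∀ i, baseAt v i = baseAt u i ∧ ¬(undotAt u i = true ∧ undotAt v i = true) := by
  constructor
  · intro h
    rcases Option.isSome_iff_exists.mp h with ⟨w, hw⟩
    rcases matchWord_eq_some_iff.mp hw with ⟨h1, _, h3⟩
    exact ⟨h1, fun i => ⟨(h3 i).1, (h3 i).2.2.1⟩⟩
  · rintro ⟨hlen, hpt⟩
    set w : List (DLetter S) := List.ofFn
      (fun i : Fin u.length => ((u[i]).1, !(undotAt u i || undotAt v i))) with hwdef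
    have hwl : w.length = u.length := by simp [hwdef]
    have hbase : ∀ i, baseAt w i = baseAt u i := by
      intro i
      by_cases h : i < u.length
      · simp [hwdef, baseAt, List.getElem?_ofFn, List.ofFnNthVal, h, List.getElem?_eq_getElem h]
      · rw [baseAt_of_le (by omega), baseAt_of_le (by omega)]
    have hdot : ∀ i, undotAt w i = (undotAt u i || undotAt v i) := by
      intro i
      by_cases h : i < u.length
      · simp [hwdef, undotAt, List.getElem?_ofFn, List.ofFnNthVal, h]
      · have h1 := undotAt_of_le (x := w) (i := i) (by omega)
        have h2 := undotAt_of_le (x := u) (i := i) (by omega)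
        have h3 := undotAt_of_le (x := v) (i := i) (by omega)
        simp [h1, h2, h3]
    have : matchWord u v = some w :=
      matchWord_eq_some_iff.mpr ⟨hlen, hwl, fun i =>
        ⟨(hpt i).1, hbase i, (hpt i).2, hdot i⟩⟩
    simp [this]

lemma matchWord_isSome_symm {u v : List (DLetter S)} (h : (matchWord u v).isSome = true) :
    (matchWord v u).isSome = true := by
  rcases matchWord_isSome_iff.mp h with ⟨hl, hp⟩
  exact matchWord_isSome_iff.mpr ⟨hl.symm, fun i =>
    ⟨(hp i).1.symm, fun hx => (hp i).2 ⟨hx.2, hx.1⟩⟩⟩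

/-- The positional characterization of an `n`-fold match:
all participants have the same projection on `Σ` as `u`, and at every position
the number of participants carrying an undotted letter is `1` if `u` is undotted
there and `0` otherwise. -/
def MatchAll (xs : List (List (DLetter S))) (u : List (DLetter S)) : Prop :=
  (∀ x ∈ xs, x.length = u.length ∧ ∀ i, baseAt x i = baseAt u i) ∧
  ∀ i, xs.countP (fun x => undotAt x i) = (if undotAt u i = true then 1 else 0)

lemma mem_matchIter_iff {B : Language (DLetter S)} {n : ℕ} {u : List (DLetter S)} :
    u ∈ matchIter B n ↔ ∃ xs, xs.length = n + 1 ∧ (∀ x ∈ xs, x ∈ B) ∧ MatchAll xs u := by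
  induction n generalizing u with
  | zero =>
    constructor
    · intro h
      refine ⟨[u], rfl, by simpa [matchIter] using h, ⟨by simp, fun i => by simp [List.countP_cons]⟩⟩
    · rintro ⟨xs, hlen, hmem, hb, hc⟩
      obtain ⟨x, rfl⟩ : ∃ x, xs = [x] := List.length_eq_one_iff.mp hlen
      have hx := hb x (by simp)
      have hxu : x = u := by
        refine word_ext hx.1 hx.2 (fun i => ?_)
        have := hc i
        simp only [List.countP_cons, List.countP_nil, Nat.zero_add] at this
        by_cases h1 : undotAt x i <;> by_cases h2 : undotAt u i <;> simp_all
      exact hxu ▸ hmem x (by simp)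
  | succ n ih =>
    constructor
    · intro h
      obtain ⟨v, hv, x, hxB, hmw⟩ := h
      rcases ih.mp hv with ⟨xs, hlen, hmem, hb, hc⟩
      rcases matchWord_eq_some_iff.mp hmw with ⟨hl1, hl2, hpt⟩
      refine ⟨x :: xs, by simp [hlen], ?_, ?_, ?_⟩
      · intro z hz; rcases List.mem_cons.mp hz with rfl | hz
        · exact hxB
        · exact hmem z hz
      · intro z hz; rcases List.mem_cons.mp hz with rfl | hz
        · exact ⟨hl1.trans hl2.symm, fun i => (hpt i).1.trans (hpt i).2.1.symm⟩
        · exact ⟨(hb z hz).1.trans hl2.symm, fun i => ((hb z hz).2 i).trans (hpt i).2.1.symm⟩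
      · intro i
        have h1 := hc i
        have h2 := (hpt i).2.2.1
        have h3 := (hpt i).2.2.2
        rw [List.countP_cons, h1]
        by_cases hx1 : undotAt v i <;> by_cases hx2 : undotAt x i <;> simp_all
    · rintro ⟨xs, hlen, hmem, hb, hc⟩
      obtain ⟨x, xs', rfl⟩ : ∃ x xs', xs = x :: xs' := by
        cases xs with
        | nil => simp at hlen
        | cons a l => exact ⟨a, l, rfl⟩
      set v : List (DLetter S) := List.ofFn (fun i : Fin u.length =>
        ((u[i]).1, decide (xs'.countP (fun x => undotAt x (i : ℕ)) = 0))) with hvdef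
      have hvl : v.length = u.length := by simp [hvdef]
      have hvb : ∀ i, baseAt v i = baseAt u i := by
        intro i
        by_cases h : i < u.length
        · simp [hvdef, baseAt, List.getElem?_ofFn, List.ofFnNthVal, h, List.getElem?_eq_getElem h]
        · rw [baseAt_of_le (by omega), baseAt_of_le (by omega)]
      have hvd : ∀ i, (undotAt v i = true ↔ xs'.countP (fun x => undotAt x i) ≠ 0) := by
        intro i
        by_cases h : i < u.length
        · simp [hvdef, undotAt, List.getElem?_ofFn, List.ofFnNthVal, h]
        · rw [undotAt_of_le (by omega)]
          have : xs'.countP (fun x => undotAt x i) = 0 := by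
            rw [List.countP_eq_zero]
            intro a ha
            have := (hb a (List.mem_cons_of_mem _ ha)).1
            simp [undotAt_of_le (x := a) (i := i) (by omega)]
          simp [this]
      have hble : ∀ i, xs'.countP (fun x => undotAt x i) +
          (if undotAt x i = true then 1 else 0) = (if undotAt u i = true then 1 else 0) := by
        intro i
        have := hc i
        rwa [List.countP_cons] at this
      have hma' : MatchAll xs' v := by
        refine ⟨fun z hz => ⟨((hb z (List.mem_cons_of_mem _ hz)).1).trans hvl.symm,
          fun i => ((hb z (List.mem_cons_of_mem _ hz)).2 i).trans (hvb i).symm⟩, fun i => ?_⟩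
        have h1 := hble i
        have h2 := hvd i
        by_cases h3 : undotAt v i = true
        · rw [if_pos h3]
          have h4 := h2.mp h3
          split_ifs at h1 <;> omega
        · rw [if_neg h3]
          by_contra hne
          exact h3 (h2.mpr hne)
      have hmw : matchWord v x = some u := by
        refine matchWord_eq_some_iff.mpr ⟨(hb x (by simp)).1.trans hvl.symm, hvl.symm,
          fun i => ⟨((hb x (by simp)).2 i).trans (hvb i).symm, (hvb i).symm, ?_, ?_⟩⟩
        · rintro ⟨h1, h2⟩
          have h3 := (hvd i).mp h1
          have h4 := hble i
          simp [h2] at h4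
          split_ifs at h4 <;> omega
        · have h1 := hble i
          have h2 := hvd i
          by_cases h3 : undotAt v i = true
          · have h4 := h2.mp h3
            have h5 : undotAt u i = true := by
              by_contra h6
              rw [if_neg h6] at h1
              split_ifs at h1 <;> omega
            rw [h3, h5, Bool.true_or]
          · have h4 : List.countP (fun x => undotAt x i) xs' = 0 := by
              by_contra hne
              exact h3 (h2.mpr hne)
            rw [h4, Nat.zero_add] at h1
            have h3' : undotAt v i = false := Bool.eq_false_iff.mpr h3
            rw [h3', Bool.false_or]
            by_cases h6 : undotAt x i = true <;> by_cases h7 : undotAt u i = true <;>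
              simp_all
      exact ⟨v, ih.mpr ⟨xs', by simpa using hlen, fun z hz => hmem z (List.mem_cons_of_mem _ hz),
        hma'⟩, x, hmem x (by simp), hmw⟩

lemma mem_matchClosure_iff {B : Language (DLetter S)} {u : List (DLetter S)} :
    u ∈ matchClosure B ↔ ∃ xs, xs ≠ [] ∧ (∀ x ∈ xs, x ∈ B) ∧ MatchAll xs u := by
  rw [matchClosure, Language.mem_iSup]
  constructor
  · rintro ⟨n, hn⟩
    rcases mem_matchIter_iff.mp hn with ⟨xs, hl, hm, hma⟩
    exact ⟨xs, by rintro rfl; simp at hl, hm, hma⟩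
  · rintro ⟨xs, hne, hm, hma⟩
    have hpos : 0 < xs.length := List.length_pos_iff.mpr hne
    exact ⟨xs.length - 1, mem_matchIter_iff.mpr ⟨xs, by omega, hm, hma⟩⟩

lemma mem_Cons_iff {B : Language (DLetter S)} {w : List S} :
    w ∈ Cons B ↔ ∃ xs, xs ≠ [] ∧ (∀ x ∈ xs, x ∈ B) ∧ MatchAll xs (undotWord w) := by
  change undotWord w ∈ matchClosure B ↔ _
  exact mem_matchClosure_iff

lemma MatchAll_perm {xs ys : List (List (DLetter S))} {u : List (DLetter S)}
    (hp : xs.Perm ys) (h : MatchAll xs u) : MatchAll ys u :=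
  ⟨fun x hx => h.1 x (hp.mem_iff.mpr hx), fun i => ((hp.countP_eq _).symm).trans (h.2 i)⟩

lemma pair_match {y x u : List (DLetter S)} {rest : List (List (DLetter S))}
    (h : MatchAll (y :: rest) u) (hx : x ∈ rest) : (matchWord y x).isSome = true := by
  refine matchWord_isSome_iff.mpr ⟨?_, fun i => ⟨?_, ?_⟩⟩
  · exact (h.1 x (List.mem_cons_of_mem _ hx)).1.trans (h.1 y (by simp)).1.symm
  · exact ((h.1 x (List.mem_cons_of_mem _ hx)).2 i).trans ((h.1 y (by simp)).2 i).symm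
  · rintro ⟨h1, h2⟩
    have hc := h.2 i
    rw [List.countP_cons] at hc
    have h3 : 0 < rest.countP (fun x => undotAt x i) :=
      List.countP_pos_iff.mpr ⟨x, hx, h2⟩
    rw [if_pos h1] at hc
    split_ifs at hc <;> omega

lemma ne_nil_of_mem_sc {sc : Language (DLetter S)} (hsc : matchLang sc sc = ⊥)
    {y : List (DLetter S)} (hy : y ∈ sc) : y ≠ [] := by
  rintro rfl
  have h1 : ([] : List (DLetter S)) ∈ matchLang sc sc := ⟨[], hy, [], hy, rfl⟩
  rw [hsc] at h1
  exact h1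

lemma extract_scaffold {sc fl : Language (DLetter S)}
    (hfl : Cons fl = (⊥ : Language S)) (hsc : matchLang sc sc = ⊥)
    {xs : List (List (DLetter S))} {w : List S} (hne : xs ≠ [])
    (hmem : ∀ x ∈ xs, x ∈ sc ∨ x ∈ fl) (hma : MatchAll xs (undotWord w)) :
    ∃ y rest, y ∈ sc ∧ (∀ x ∈ rest, x ∈ fl) ∧ MatchAll (y :: rest) (undotWord w) := by
  by_cases hs : ∃ x ∈ xs, x ∈ sc
  · obtain ⟨y, hy, hysc⟩ := hs
    obtain ⟨s, t, rfl⟩ := List.append_of_mem hy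
    have hperm : List.Perm (s ++ y :: t) (y :: (s ++ t)) := List.perm_middle
    have hma' := MatchAll_perm hperm hma
    refine ⟨y, s ++ t, hysc, ?_, hma'⟩
    intro x hx
    rcases hmem x (hperm.symm.subset (List.mem_cons_of_mem _ hx)) with hxs | hxf
    · exfalso
      have h1 : (matchWord y x).isSome = true := pair_match hma' hx
      rcases Option.isSome_iff_exists.mp h1 with ⟨m, hm⟩
      have h2 : m ∈ matchLang sc sc := ⟨y, hysc, x, hxs, hm⟩
      rw [hsc] at h2
      exact h2
    · exact hxf
  · exfalso
    push_neg at hs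
    have h1 : w ∈ Cons fl := mem_Cons_iff.mpr ⟨xs, hne, fun x hx =>
      (hmem x hx).resolve_left (hs x hx), hma⟩
    rw [hfl] at h1
    exact h1

/-! pointwise lemmas about append, dotWord, undotWord -/

lemma undotAt_append (a b : List (DLetter S)) (i : ℕ) :
    undotAt (a ++ b) i = if i < a.length then undotAt a i else undotAt b (i - a.length) := by
  by_cases h : i < a.length <;> simp [undotAt, List.getElem?_append, h]

lemma baseAt_append (a b : List (DLetter S)) (i : ℕ) :
    baseAt (a ++ b) i = if i < a.length then baseAt a i else baseAt b (i - a.length) := by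
  by_cases h : i < a.length <;> simp [baseAt, List.getElem?_append, h]

lemma length_dotWord (y : List (DLetter S)) : (dotWord y).length = y.length := by
  simp [dotWord]

lemma undotAt_dotWord (y : List (DLetter S)) (i : ℕ) : undotAt (dotWord y) i = false := by
  by_cases h : i < y.length
  · simp [undotAt, dotWord, List.getElem?_map, List.getElem?_eq_getElem h]
  · exact undotAt_of_le (by rw [length_dotWord]; omega)

lemma baseAt_dotWord (y : List (DLetter S)) (i : ℕ) : baseAt (dotWord y) i = baseAt y i := by
  cases h : y[i]? <;> simp [baseAt, dotWord, List.getElem?_map, h]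

lemma length_undotWord (w : List S) : (undotWord w).length = w.length := by
  simp [undotWord]

lemma undotWord_append (a b : List S) : undotWord (a ++ b) = undotWord a ++ undotWord b := by
  simp [undotWord]

lemma baseAt_split {a b c d : List (DLetter S)} (hac : a.length = c.length)
    (h : ∀ i, baseAt (a ++ b) i = baseAt (c ++ d) i) :
    (∀ i, baseAt a i = baseAt c i) ∧ (∀ i, baseAt b i = baseAt d i) := by
  constructor
  · intro i
    by_cases hi : i < a.length
    · have h1 := h i
      rw [baseAt_append, baseAt_append, if_pos hi, if_pos (by omega)] at h1
      exact h1
    · rw [baseAt_of_le (by omega), baseAt_of_le (by omega)]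
  · intro i
    have h1 := h (a.length + i)
    rw [baseAt_append, baseAt_append, if_neg (by omega), if_neg (by omega), hac,
      Nat.add_sub_cancel_left] at h1
    exact h1

lemma baseAt_glue {a b c d : List (DLetter S)} (hac : a.length = c.length)
    (h1 : ∀ i, baseAt a i = baseAt c i) (h2 : ∀ i, baseAt b i = baseAt d i) (i : ℕ) :
    baseAt (a ++ b) i = baseAt (c ++ d) i := by
  rw [baseAt_append, baseAt_append, hac]
  split
  · exact h1 i
  · exact h2 _

lemma MatchAll_glue {u v y z : List (DLetter S)} {F G : List (List (DLetter S))}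
    (hy : MatchAll (y :: F) u) (hz : MatchAll (z :: G) v) :
    MatchAll ((y ++ z) :: (F.map (· ++ dotWord z) ++ G.map (dotWord y ++ ·))) (u ++ v) := by
  have hyl : y.length = u.length := (hy.1 y (by simp)).1
  have hzl : z.length = v.length := (hz.1 z (by simp)).1
  have hzb : ∀ i, baseAt (dotWord z) i = baseAt v i :=
    fun i => (baseAt_dotWord z i).trans ((hz.1 z (by simp)).2 i)
  have hyb : ∀ i, baseAt (dotWord y) i = baseAt u i :=
    fun i => (baseAt_dotWord y i).trans ((hy.1 y (by simp)).2 i)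
  constructor
  · intro x hx
    rcases List.mem_cons.mp hx with rfl | hx
    · exact ⟨by simp [hyl, hzl], baseAt_glue hyl ((hy.1 y (by simp)).2) ((hz.1 z (by simp)).2)⟩
    · rcases List.mem_append.mp hx with hx | hx
      · rcases List.mem_map.mp hx with ⟨f, hf, rfl⟩
        have hfm := hy.1 f (List.mem_cons_of_mem _ hf)
        exact ⟨by simp [hfm.1, length_dotWord, hzl],
          baseAt_glue hfm.1 hfm.2 hzb⟩
      · rcases List.mem_map.mp hx with ⟨g, hg, rfl⟩
        have hgm := hz.1 g (List.mem_cons_of_mem _ hg)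
        exact ⟨by simp [hgm.1, length_dotWord, hyl],
          baseAt_glue (by rw [length_dotWord, hyl]) hyb hgm.2⟩
  · intro i
    by_cases hi : i < u.length
    · have hF : F.countP ((fun x => undotAt x i) ∘ (· ++ dotWord z)) =
          F.countP (fun x => undotAt x i) := by
        apply List.countP_congr
        intro f hf
        have hfl : f.length = u.length := (hy.1 f (List.mem_cons_of_mem _ hf)).1
        simp [Function.comp, undotAt_append, hfl, hi]
      have hG : G.countP ((fun x => undotAt x i) ∘ (dotWord y ++ ·)) = 0 := by
        rw [List.countP_eq_zero]
        intro g hg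
        simp [Function.comp, undotAt_append, length_dotWord, hyl, hi, undotAt_dotWord]
      have hhead1 : undotAt (y ++ z) i = undotAt y i := by
        rw [undotAt_append, if_pos (by omega)]
      have hhead2 : undotAt (u ++ v) i = undotAt u i := by
        rw [undotAt_append, if_pos hi]
      have hstep := hy.2 i
      rw [List.countP_cons] at hstep
      simp only [List.countP_cons, List.countP_append, List.countP_map]
      rw [hF, hG, hhead1, hhead2]
      omega
    · have hF : F.countP ((fun x => undotAt x i) ∘ (· ++ dotWord z)) = 0 := by
        rw [List.countP_eq_zero]
        intro f hf
        have hfl : f.length = u.length := (hy.1 f (List.mem_cons_of_mem _ hf)).1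
        simp [Function.comp, undotAt_append, hfl, hi, undotAt_dotWord]
      have hG : G.countP ((fun x => undotAt x i) ∘ (dotWord y ++ ·)) =
          G.countP (fun x => undotAt x (i - u.length)) := by
        apply List.countP_congr
        intro g hg
        simp [Function.comp, undotAt_append, length_dotWord, hyl, hi]
      have hhead1 : undotAt (y ++ z) i = undotAt z (i - u.length) := by
        rw [undotAt_append, if_neg (by omega), hyl]
      have hhead2 : undotAt (u ++ v) i = undotAt v (i - u.length) := by
        rw [undotAt_append, if_neg (by omega)]
      have hstep := hz.2 (i - u.length)
      rw [List.countP_cons] at hstep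
      simp only [List.countP_cons, List.countP_append, List.countP_map]
      rw [hF, hG, hhead1, hhead2]
      omega

lemma MatchAll_split {u v y z : List (DLetter S)} {F G : List (List (DLetter S))}
    (hyl : y.length = u.length) (hzl : z.length = v.length)
    (h : MatchAll ((y ++ z) :: (F.map (· ++ dotWord z) ++ G.map (dotWord y ++ ·))) (u ++ v)) :
    MatchAll (y :: F) u ∧ MatchAll (z :: G) v := by
  have hheadb := (h.1 (y ++ z) (by simp)).2
  have hFlen : ∀ f ∈ F, f.length = u.length := by
    intro f hf
    have h1 := (h.1 (f ++ dotWord z)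
      (List.mem_cons_of_mem _ (List.mem_append_left _ (List.mem_map_of_mem hf)))).1
    simp only [List.length_append, length_dotWord] at h1
    omega
  have hGlen : ∀ g ∈ G, g.length = v.length := by
    intro g hg
    have h1 := (h.1 (dotWord y ++ g)
      (List.mem_cons_of_mem _ (List.mem_append_right _ (List.mem_map_of_mem hg)))).1
    simp only [List.length_append, length_dotWord] at h1
    omega
  have hFb : ∀ f ∈ F, ∀ i, baseAt f i = baseAt u i := by
    intro f hf
    exact (baseAt_split (hFlen f hf) ((h.1 (f ++ dotWord z)
      (List.mem_cons_of_mem _ (List.mem_append_left _ (List.mem_map_of_mem hf)))).2)).1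
  have hGb : ∀ g ∈ G, ∀ i, baseAt g i = baseAt v i := by
    intro g hg
    exact (baseAt_split (by rw [length_dotWord, hyl]) ((h.1 (dotWord y ++ g)
      (List.mem_cons_of_mem _ (List.mem_append_right _ (List.mem_map_of_mem hg)))).2)).2
  have hyb := (baseAt_split hyl hheadb).1
  have hzb := (baseAt_split hyl hheadb).2
  constructor
  · refine ⟨?_, ?_⟩
    · intro x hx
      rcases List.mem_cons.mp hx with rfl | hx
      · exact ⟨hyl, hyb⟩
      · exact ⟨hFlen x hx, hFb x hx⟩
    · intro i
      by_cases hi : i < u.length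
      · have hcnt := h.2 i
        have hF : F.countP ((fun x => undotAt x i) ∘ (· ++ dotWord z)) =
            F.countP (fun x => undotAt x i) := by
          apply List.countP_congr
          intro f hf
          simp [Function.comp, undotAt_append, hFlen f hf, hi]
        have hG : G.countP ((fun x => undotAt x i) ∘ (dotWord y ++ ·)) = 0 := by
          rw [List.countP_eq_zero]
          intro g hg
          simp [Function.comp, undotAt_append, length_dotWord, hyl, hi, undotAt_dotWord]
        have hhead1 : undotAt (y ++ z) i = undotAt y i := by
          rw [undotAt_append, if_pos (by omega)]
        have hhead2 : undotAt (u ++ v) i = undotAt u i := by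
          rw [undotAt_append, if_pos hi]
        simp only [List.countP_cons, List.countP_append, List.countP_map, hF, hG,
          hhead1, hhead2] at hcnt
        rw [List.countP_cons]
        omega
      · rw [List.countP_eq_zero.mpr, if_neg (by rw [undotAt_of_le (by omega)]; simp)]
        intro a ha
        rcases List.mem_cons.mp ha with rfl | ha
        · rw [undotAt_of_le (by omega)]; simp
        · rw [undotAt_of_le (by rw [hFlen a ha]; omega)]; simp
  · refine ⟨?_, ?_⟩
    · intro x hx
      rcases List.mem_cons.mp hx with rfl | hx
      · exact ⟨hzl, hzb⟩
      · exact ⟨hGlen x hx, hGb x hx⟩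
    · intro j
      by_cases hj : j < v.length
      · have hcnt := h.2 (u.length + j)
        have hF : F.countP ((fun x => undotAt x (u.length + j)) ∘ (· ++ dotWord z)) = 0 := by
          rw [List.countP_eq_zero]
          intro f hf
          simp [Function.comp, undotAt_append, hFlen f hf, undotAt_dotWord]
        have hG : G.countP ((fun x => undotAt x (u.length + j)) ∘ (dotWord y ++ ·)) =
            G.countP (fun x => undotAt x j) := by
          apply List.countP_congr
          intro g hg
          rw [Function.comp_apply, undotAt_append, if_neg (by rw [length_dotWord, hyl]; omega),
            length_dotWord, hyl, Nat.add_sub_cancel_left]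
        have hhead1 : undotAt ((y ++ z)) (u.length + j) = undotAt z j := by
          rw [undotAt_append, if_neg (by omega), hyl, Nat.add_sub_cancel_left]
        have hhead2 : undotAt (u ++ v) (u.length + j) = undotAt v j := by
          rw [undotAt_append, if_neg (by omega), Nat.add_sub_cancel_left]
        simp only [List.countP_cons, List.countP_append, List.countP_map, hF, hG,
          hhead1, hhead2] at hcnt
        rw [List.countP_cons]
        omega
      · rw [List.countP_eq_zero.mpr, if_neg (by rw [undotAt_of_le (by omega)]; simp)]
        intro a ha
        rcases List.mem_cons.mp ha with rfl | ha
        · rw [undotAt_of_le (by omega)]; simp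
        · rw [undotAt_of_le (by rw [hGlen a ha]; omega)]; simp


lemma mem_sup_iff {A B : Language (DLetter S)} {x : List (DLetter S)} :
    x ∈ A ⊔ B ↔ x ∈ A ∨ x ∈ B := Iff.rfl

lemma classify_rest {sc' fl' sc'' fl'' : Language (DLetter S)} {y' y'' : List (DLetter S)}
    (hy' : y' ∈ sc') (hy'' : y'' ∈ sc'')
    (hcond1 : ∀ w' : List (DLetter S), w' ≠ [] → ∀ y' ∈ sc', ∀ y'' ∈ sc'',
      ((∃ x' ∈ fl', w' = x' ++ dotWord y'' ∧ (matchWord x' y').isSome) ↔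
        (w' ∈ fl' ∧ (matchWord w' (y' ++ y'')).isSome)))
    (hcond2 : ∀ w'' : List (DLetter S), w'' ≠ [] → ∀ y' ∈ sc', ∀ y'' ∈ sc'',
      ((∃ x'' ∈ fl'', w'' = dotWord y' ++ x'' ∧ (matchWord x'' y'').isSome) ↔
        (w'' ∈ fl'' ∧ (matchWord w'' (y' ++ y'')).isSome))) :
    ∀ rest : List (List (DLetter S)), (∀ z ∈ rest, (z ∈ fl' ∨ z ∈ fl'') ∧ z ≠ [] ∧
      (matchWord z (y' ++ y'')).isSome = true) →
    ∃ F G : List (List (DLetter S)), (∀ f ∈ F, f ∈ fl') ∧ (∀ g ∈ G, g ∈ fl'') ∧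
      List.Perm rest (F.map (· ++ dotWord y'') ++ G.map (dotWord y' ++ ·)) := by
  intro rest
  induction rest with
  | nil => exact fun _ => ⟨[], [], by simp, by simp, by simp⟩
  | cons z rest ih =>
    intro hz
    obtain ⟨F, G, hF, hG, hperm⟩ := ih (fun a ha => hz a (List.mem_cons_of_mem _ ha))
    obtain ⟨hmem, hne, hmw⟩ := hz z (by simp)
    rcases hmem with hmem | hmem
    · obtain ⟨x, hx, heq, -⟩ := (hcond1 z hne y' hy' y'' hy'').mpr ⟨hmem, hmw⟩
      refine ⟨x :: F, G, ?_, hG, ?_⟩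
      · intro f hf
        rcases List.mem_cons.mp hf with rfl | hf
        exacts [hx, hF f hf]
      · rw [List.map_cons, List.cons_append, ← heq]
        exact hperm.cons z
    · obtain ⟨x, hx, heq, -⟩ := (hcond2 z hne y' hy' y'' hy'').mpr ⟨hmem, hmw⟩
      refine ⟨F, x :: G, hF, ?_, ?_⟩
      · intro g hg
        rcases List.mem_cons.mp hg with rfl | hg
        exacts [hx, hG g hg]
      · rw [List.map_cons, ← heq]
        exact (hperm.cons z).trans List.perm_middle.symm


/-- if `B' = sc' ∪ fl'` and `B'' = sc'' ∪ fl''` are decomposed bases that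
are concatenable, then `C(B')·C(B'') = C(B' ⊙ B'')`. -/
theorem cons_concat_of_concatenable (sc' fl' sc'' fl'' : Language (DLetter S))
    (h' : IsDecomposed (sc' ⊔ fl') sc' fl')
    (h'' : IsDecomposed (sc'' ⊔ fl'') sc'' fl'')
    (hc : Concatenable sc' fl' sc'' fl'') :
    Cons (sc' ⊔ fl') * Cons (sc'' ⊔ fl'') = Cons (dotProduct sc' fl' sc'' fl'') := by
  obtain ⟨hd, hcond1, hcond2⟩ := hc
  obtain ⟨-, -, -, hflP, hscP⟩ := hd
  obtain ⟨-, -, -, hfl', hsc'⟩ := h'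
  obtain ⟨-, -, -, hfl'', hsc''⟩ := h''
  ext w
  constructor
  · intro hw
    rcases Language.mem_mul.mp hw with ⟨w1, hw1, w2, hw2, rfl⟩
    rcases mem_Cons_iff.mp hw1 with ⟨xs1, hne1, hmem1, hma1⟩
    rcases mem_Cons_iff.mp hw2 with ⟨xs2, hne2, hmem2, hma2⟩
    obtain ⟨y1, F1, hy1, hF1, hma1'⟩ :=
      extract_scaffold hfl' hsc' hne1 (fun x hx => mem_sup_iff.mp (hmem1 x hx)) hma1
    obtain ⟨y2, F2, hy2, hF2, hma2'⟩ :=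
      extract_scaffold hfl'' hsc'' hne2 (fun x hx => mem_sup_iff.mp (hmem2 x hx)) hma2
    have hy2ne : y2 ≠ [] := ne_nil_of_mem_sc hsc'' hy2
    have hy1ne : y1 ≠ [] := ne_nil_of_mem_sc hsc' hy1
    rw [mem_Cons_iff]
    refine ⟨(y1 ++ y2) :: (F1.map (· ++ dotWord y2) ++ F2.map (dotWord y1 ++ ·)),
      by simp, ?_, ?_⟩
    · intro x hx
      rcases List.mem_cons.mp hx with rfl | hx
      · exact Or.inl (Or.inl (Language.mem_mul.mpr ⟨y1, hy1, y2, hy2, rfl⟩))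
      · rcases List.mem_append.mp hx with hx | hx
        · rcases List.mem_map.mp hx with ⟨f, hf, rfl⟩
          have hmwf : (matchWord f y1).isSome = true :=
            matchWord_isSome_symm (pair_match hma1' hf)
          have hnef : f ++ dotWord y2 ≠ [] := by
            simp only [ne_eq, List.append_eq_nil_iff]
            rintro ⟨-, hdn⟩
            exact hy2ne (by simpa [dotWord] using hdn)
          exact Or.inl (Or.inr
            ((hcond1 (f ++ dotWord y2) hnef y1 hy1 y2 hy2).mp ⟨f, hF1 f hf, rfl, hmwf⟩).1)
        · rcases List.mem_map.mp hx with ⟨g, hg, rfl⟩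
          have hmwg : (matchWord g y2).isSome = true :=
            matchWord_isSome_symm (pair_match hma2' hg)
          have hneg : dotWord y1 ++ g ≠ [] := by
            simp only [ne_eq, List.append_eq_nil_iff]
            rintro ⟨hdn, -⟩
            exact hy1ne (by simpa [dotWord] using hdn)
          exact Or.inr
            ((hcond2 (dotWord y1 ++ g) hneg y1 hy1 y2 hy2).mp ⟨g, hF2 g hg, rfl, hmwg⟩).1
    · rw [undotWord_append]
      exact MatchAll_glue hma1' hma2'
  · intro hw
    rcases mem_Cons_iff.mp hw with ⟨xs, hne, hmem, hma⟩
    obtain ⟨y, rest, hysc, hrest, hma'⟩ := extract_scaffold hflP hscP hne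
      (fun x hx => by
        rcases mem_sup_iff.mp (hmem x hx) with hx1 | hx1
        · rcases mem_sup_iff.mp hx1 with hx2 | hx2
          · exact Or.inl hx2
          · exact Or.inr (Or.inl hx2)
        · exact Or.inr (Or.inr hx1)) hma
    rcases Language.mem_mul.mp hysc with ⟨y1, hy1, y2, hy2, rfl⟩
    have hy1ne : y1 ≠ [] := ne_nil_of_mem_sc hsc' hy1
    have hylen : (y1 ++ y2).length = (undotWord w).length :=
      (hma'.1 (y1 ++ y2) (by simp)).1
    rw [List.length_append, length_undotWord] at hylen
    set w1 := w.take y1.length with hw1def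
    set w2 := w.drop y1.length with hw2def
    have hw12 : w = w1 ++ w2 := (List.take_append_drop _ w).symm
    have hw1l : w1.length = y1.length := by
      rw [hw1def, List.length_take]; omega
    have hw2l : w2.length = y2.length := by
      rw [hw2def, List.length_drop]; omega
    have hrest' : ∀ z ∈ rest, (z ∈ fl' ∨ z ∈ fl'') ∧ z ≠ [] ∧
        (matchWord z (y1 ++ y2)).isSome = true := by
      intro z hz
      refine ⟨hrest z hz, ?_, matchWord_isSome_symm (pair_match hma' hz)⟩
      have hzl := (hma'.1 z (List.mem_cons_of_mem _ hz)).1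
      rw [length_undotWord] at hzl
      intro hznil
      rw [hznil] at hzl
      simp only [List.length_nil] at hzl
      have : y1.length = 0 := by omega
      exact hy1ne (List.eq_nil_of_length_eq_zero this)
    obtain ⟨F, G, hF, hG, hperm⟩ :=
      classify_rest hy1 hy2 hcond1 hcond2 rest hrest'
    have hmaP : MatchAll ((y1 ++ y2) ::
        (F.map (· ++ dotWord y2) ++ G.map (dotWord y1 ++ ·)))
        (undotWord w1 ++ undotWord w2) := by
      rw [← undotWord_append, ← hw12]
      exact MatchAll_perm (hperm.cons (y1 ++ y2)) hma'
    obtain ⟨hmaL, hmaR⟩ := MatchAll_split (by rw [length_undotWord, hw1l])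
      (by rw [length_undotWord, hw2l]) hmaP
    rw [hw12]
    refine Language.mem_mul.mpr ⟨w1, ?_, w2, ?_, rfl⟩
    · refine mem_Cons_iff.mpr ⟨y1 :: F, by simp, ?_, hmaL⟩
      intro x hx
      rcases List.mem_cons.mp hx with rfl | hx
      · exact Or.inl hy1
      · exact Or.inr (hF x hx)
    · refine mem_Cons_iff.mpr ⟨y2 :: G, by simp, ?_, hmaR⟩
      intro x hx
      rcases List.mem_cons.mp hx with rfl | hx
      · exact Or.inl hy2
      · exact Or.inr (hG x hx)


end Consensual
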